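/- The transition function p_t(x,E) = ∫_E Z_t(x-y) d^ny satisfies condition (L): for each s > 0 and each compact subset E ⊂ ℚ_p^n, sup_{0 ≤ t ≤ s} p_t(x, E) → 0 as ‖x‖_p → ∞. -/

import Mathlib

open MeasureTheory

variable {p : ℕ} [Fact p.Prime] [MeasurableSpace ℚ_[p]] [BorelSpace ℚ_[p]] {n : ℕ}

/-- The transition function `p_t(x,E) = (Z_t * 1_E)(x)` for `t > 0`, `p_0(x,E) = 1_E(x)`. -/
noncomputable def transFn (μ : Measure (Fin n → ℚ_[p])) (Z : ℝ → (Fin n → ℚ_[p]) → ℝ)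
    (t : ℝ) (x : Fin n → ℚ_[p]) (E : Set (Fin n → ℚ_[p])) : ℝ :=
  if t = 0 then Set.indicator E (fun _ => (1 : ℝ)) x else ∫ y in E, Z t (x - y) ∂μ

/-- Condition (L): for each `s > 0` and each compact `E ⊂ ℚ_p^n`,
`sup_{0 ≤ t ≤ s} p_t(x,E) → 0` as `‖x‖_p → ∞`. -/
theorem transFn_condition_L
    (μ : Measure (Fin n → ℚ_[p])) [μ.IsAddHaarMeasure]
    (Z : ℝ → (Fin n → ℚ_[p]) → ℝ)
    (hpos : ∀ t : ℝ, 0 < t → ∀ x, 0 ≤ Z t x)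
    (hcont : ∀ t : ℝ, 0 < t → Continuous (Z t))
    (A d β : ℝ) (hA : 0 < A) (hd : 0 < d) (hβ : 0 < β)
    (hdecay : ∀ t : ℝ, 0 < t → ∀ x : Fin n → ℚ_[p], x ≠ 0 →
      Z t x ≤ A * t * ‖x‖ ^ (-(d * β) - (n : ℝ)))
    (s : ℝ) (hs : 0 < s)
    (E : Set (Fin n → ℚ_[p])) (hE : IsCompact E) :
    ∀ ε : ℝ, 0 < ε → ∃ R : ℝ, ∀ x : Fin n → ℚ_[p], R < ‖x‖ →
      ∀ t : ℝ, 0 ≤ t → t ≤ s → transFn μ Z t x E ≤ ε := by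
  intro ε hε
  obtain ⟨C₀, hC₀⟩ := hE.isBounded.exists_norm_le
  set C : ℝ := max C₀ 0 with hCdef
  have hC : ∀ y ∈ E, ‖y‖ ≤ C := fun y hy => (hC₀ y hy).trans (le_max_left _ _)
  have hC0 : 0 ≤ C := le_max_right _ _
  set e : ℝ := -(d * β) - (n : ℝ) with he_def
  have he_neg : e ≤ 0 := by
    have : (0:ℝ) < d * β := mul_pos hd hβ
    have : (0:ℝ) ≤ (n:ℝ) := Nat.cast_nonneg n
    simp only [he_def]; linarith
  set K : ℝ := A * s * (μ E).toReal with hKdef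
  -- eventually K * r ^ e < ε
  have htend : Filter.Tendsto (fun r : ℝ => K * r ^ e) Filter.atTop (nhds 0) := by
    have h1 : Filter.Tendsto (fun r : ℝ => r ^ e) Filter.atTop (nhds 0) := by
      have : e = -(d * β + n) := by simp [he_def]; ring
      rw [this]
      exact tendsto_rpow_neg_atTop (by positivity)
    simpa using h1.const_mul K
  obtain ⟨R₀, hR₀⟩ := Filter.eventually_atTop.mp (htend.eventually_le_const hε)
  refine ⟨C + max R₀ 1, fun x hx t ht hts => ?_⟩
  have hxC : C + max R₀ 1 < ‖x‖ := hx
  have hr1 : (0:ℝ) < max R₀ 1 := lt_of_lt_of_le one_pos (le_max_right _ _)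
  have hxE : x ∉ E := by
    intro hmem
    have := hC x hmem
    nlinarith
  rcases eq_or_lt_of_le ht with ht0 | htpos
  · simp [transFn, ← ht0, Set.indicator_of_notMem hxE]
    positivity
  · rw [transFn, if_neg (ne_of_gt htpos)]
    set r : ℝ := ‖x‖ - C with hrdef
    have hr_pos : 0 < r := by simp only [hrdef]; nlinarith
    have hrR₀ : R₀ ≤ r := by
      have : R₀ ≤ max R₀ 1 := le_max_left _ _
      simp only [hrdef]; nlinarith
    have hbound : ∀ y ∈ E, Z t (x - y) ≤ A * t * r ^ e := by
      intro y hy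
      have hnorm : r ≤ ‖x - y‖ := by
        have h1 : ‖x‖ - ‖y‖ ≤ ‖x - y‖ := norm_sub_norm_le x y
        have h2 : ‖y‖ ≤ C := hC y hy
        simp only [hrdef]; linarith
      have hne : x - y ≠ 0 := by
        intro h
        rw [h, norm_zero] at hnorm
        linarith
      calc Z t (x - y) ≤ A * t * ‖x - y‖ ^ e := hdecay t htpos (x - y) hne
        _ ≤ A * t * r ^ e := by
            have := Real.rpow_le_rpow_of_nonpos hr_pos hnorm he_neg
            have hAt : 0 ≤ A * t := by positivity
            exact mul_le_mul_of_nonneg_left this hAt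
    have hint : IntegrableOn (fun y => Z t (x - y)) E μ := by
      have hc : Continuous fun y : Fin n → ℚ_[p] => Z t (x - y) :=
        (hcont t htpos).comp (continuous_const.sub continuous_id)
      exact hc.continuousOn.integrableOn_compact hE
    have hconst : IntegrableOn (fun _ : Fin n → ℚ_[p] => A * t * r ^ e) E μ :=
      integrableOn_const hE.measure_lt_top.ne
    calc ∫ y in E, Z t (x - y) ∂μ
        ≤ ∫ _ in E, A * t * r ^ e ∂μ :=
          setIntegral_mono_on hint hconst hE.measurableSet hbound
      _ = (μ E).toReal * (A * t * r ^ e) := by rw [setIntegral_const, smul_eq_mul]; rfl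
      _ ≤ K * r ^ e := by
          simp only [hKdef]
          have hre : (0:ℝ) ≤ r ^ e := Real.rpow_nonneg hr_pos.le e
          have hμ : (0:ℝ) ≤ (μ E).toReal := ENNReal.toReal_nonneg
          nlinarith [mul_nonneg (mul_nonneg (mul_nonneg hA.le hμ) hre) (sub_nonneg.mpr hts)]
      _ ≤ ε := hR₀ r hrR₀
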